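/- Let r > 1. With α_{n,j} the zeros of k_n and a_{n,j}(r) = (∏ₖ (α_{n,j} − α_{n,k}/r)) / (∏_{k≠j} (α_{n,j} − α_{n,k})), one has ∑_{j=1}^n a_{n,j}(r) = (n(n+1)/2)(1/r − 1). -/

import Mathlib

open Complex Polynomial Finset

lemma coeff_basis_pred {n : ℕ} (α : Fin n → ℂ) (j : Fin n) :
    (Lagrange.basis univ α j).coeff (n - 1) = (∏ k ∈ univ.erase j, (α j - α k))⁻¹ := by
  have hcard : (univ.erase j).card = n - 1 := by
    rw [card_erase_of_mem (mem_univ j), card_univ, Fintype.card_fin]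
  have hmono : (∏ k ∈ univ.erase j, (X - C (α k))).Monic :=
    monic_prod_of_monic _ _ fun k _ => monic_X_sub_C _
  have hdeg : (∏ k ∈ univ.erase j, (X - C (α k))).natDegree = n - 1 := by
    rw [natDegree_prod_of_monic _ _ fun k _ => monic_X_sub_C _]
    simp [hcard]
  rw [Lagrange.basis]
  simp_rw [Lagrange.basisDivisor]
  rw [prod_mul_distrib, ← map_prod, ← prod_inv_distrib, coeff_C_mul, ← hdeg,
    hmono.coeff_natDegree, mul_one]

lemma key_sum {n : ℕ} (α : Fin n → ℂ) (hα : Function.Injective α)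
    (g : Polynomial ℂ) (hg : g.degree < n) :
    ∑ j, g.eval (α j) / ∏ k ∈ univ.erase j, (α j - α k) = g.coeff (n - 1) := by
  have hcard : (univ : Finset (Fin n)).card = n := by simp
  have hvs : Set.InjOn α (univ : Finset (Fin n)) := hα.injOn
  have h := Lagrange.eq_interpolate (s := univ) (v := α) (f := g) hvs (by rwa [hcard])
  conv_rhs => rw [h]
  rw [Lagrange.interpolate_apply, finset_sum_coeff]
  refine Finset.sum_congr rfl fun j _ => ?_
  rw [coeff_C_mul, coeff_basis_pred, div_eq_mul_inv]

lemma degree_C_mul_le' (a : ℂ) (q : Polynomial ℂ) : (C a * q).degree ≤ q.degree :=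
  calc (C a * q).degree ≤ (C a).degree + q.degree := degree_mul_le _ _
    _ ≤ 0 + q.degree := add_le_add degree_C_le le_rfl
    _ = q.degree := zero_add _

lemma p_facts (p : ℕ → Polynomial ℂ)
    (hp0 : p 0 = 1) (hp1 : p 1 = X + 1)
    (hprec : ∀ m : ℕ, 1 ≤ m →
      p (m + 1) = (2 * m + 1) • p m + X ^ 2 * p (m - 1)) :
    ∀ m, (p m).Monic ∧ (p m).natDegree = m ∧
      (1 ≤ m → (p m).coeff (m - 1) = (m : ℂ) * ((m : ℂ) + 1) / 2) := by
  set Q : ℕ → Prop := fun m => (p m).Monic ∧ (p m).natDegree = m ∧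
      (1 ≤ m → (p m).coeff (m - 1) = (m : ℂ) * ((m : ℂ) + 1) / 2) with hQ
  have hQ0 : Q 0 := ⟨by rw [hp0]; exact monic_one, by simp [hp0], by omega⟩
  have hQ1 : Q 1 := by
    refine ⟨by rw [hp1, ← C_1]; exact monic_X_add_C 1, ?_, fun _ => ?_⟩
    · rw [hp1, ← C_1]; exact natDegree_X_add_C 1
    · norm_num [hp1]
  have key : ∀ m, Q m ∧ Q (m + 1) := by
    intro m
    induction m with
    | zero => exact ⟨hQ0, hQ1⟩
    | succ k ihk =>
      obtain ⟨⟨hm0, hd0, hc0⟩, ⟨hm1, hd1, hc1⟩⟩ := ihk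
      refine ⟨⟨hm1, hd1, hc1⟩, ?_⟩
      have hrec := hprec (k+1) (by omega)
      simp only [Nat.add_sub_cancel] at hrec
      have hsm : (2 * (k+1) + 1) • p (k+1) = C ((2 * (k+1) + 1 : ℕ) : ℂ) * p (k+1) := by
        rw [nsmul_eq_mul, C_eq_natCast]
      rw [hsm] at hrec
      have h2nd : (X ^ 2 * p k).natDegree = k + 2 := by
        rw [(monic_X_pow 2).natDegree_mul hm0, natDegree_X_pow, hd0]; omega
      have hmon2 : (X ^ 2 * p k).Monic := (monic_X_pow 2).mul hm0
      have hdegsmul : (C ((2 * (k+1) + 1 : ℕ) : ℂ) * p (k+1)).degree < (X ^ 2 * p k).degree := by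
        have h2 : (X ^ 2 * p k).degree = ((k + 2 : ℕ) : WithBot ℕ) := by
          rw [degree_eq_natDegree hmon2.ne_zero, h2nd]
        have h1 : (C ((2 * (k+1) + 1 : ℕ) : ℂ) * p (k+1)).degree ≤ ((k + 1 : ℕ) : WithBot ℕ) := by
          refine (degree_C_mul_le' _ _).trans ?_
          rw [degree_eq_natDegree hm1.ne_zero, hd1]
        rw [h2]
        exact lt_of_le_of_lt h1 (by exact_mod_cast Nat.lt_succ_self (k+1))
      have hmon : (p (k+2)).Monic := by
        rw [hrec]; exact hmon2.add_of_right hdegsmul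
      have hdeg : (p (k+2)).natDegree = k + 2 := by
        rw [hrec]
        have hd := degree_add_eq_right_of_degree_lt hdegsmul
        rw [natDegree_eq_of_degree_eq hd, h2nd]
      refine ⟨hmon, hdeg, fun _ => ?_⟩
      have hlead : (p (k+1)).coeff (k+1) = 1 := by
        have h := hm1.coeff_natDegree
        rwa [hd1] at h
      have hX2 : (X ^ 2 * p k).coeff (k+1) = (k : ℂ) * ((k : ℂ) + 1) / 2 := by
        rcases Nat.eq_zero_or_pos k with hk | hk
        · subst hk; simp [hp0]
        · have hsplit : k + 1 = (k - 1) + 2 := by omega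
          rw [hsplit, coeff_X_pow_mul, hc0 hk]
      have hco : (p (k+2)).coeff (k+1) =
          ((2 * (k+1) + 1 : ℕ) : ℂ) * (p (k+1)).coeff (k+1) + (X ^ 2 * p k).coeff (k+1) := by
        rw [hrec, coeff_add, coeff_C_mul]
      simp only [Nat.add_sub_cancel]
      rw [hco, hlead, hX2, mul_one]
      push_cast
      ring
  exact fun m => (key m).1

/-- With α_{n,j} the zeros of k_n (i.e. of the monic polynomial p_n with
k_n(z) = p_n(z)e^{−z}/z^{n+1}) and a_{n,j}(r) the partial fraction
coefficients, one has ∑ⱼ a_{n,j}(r) = (n(n+1)/2)(1/r − 1). -/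
theorem sum_anj_eq (p : ℕ → Polynomial ℂ)
    (hp0 : p 0 = 1) (hp1 : p 1 = X + 1)
    (hprec : ∀ m : ℕ, 1 ≤ m →
      p (m + 1) = (2 * m + 1) • p m + X ^ 2 * p (m - 1))
    (n : ℕ) (α : Fin n → ℂ) (hα : Function.Injective α)
    (hroots : p n = ∏ j, (X - C (α j)))
    (r : ℝ) (hr : 1 < r)
    (a : Fin n → ℂ)
    (ha : ∀ j, a j = (∏ k, (α j - α k / (r : ℂ))) /
      (∏ k ∈ univ.erase j, (α j - α k))) :
    ∑ j, a j = (n * (n + 1) / 2) * (1 / (r : ℂ) - 1) := by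
  rcases Nat.eq_zero_or_pos n with hn | hn
  · subst hn; simp
  obtain ⟨hmon, hdegn, hcoeff⟩ := p_facts p hp0 hp1 hprec n
  have hcoeffn := hcoeff hn
  set q : Polynomial ℂ := ∏ k, (X - C (α k / (r : ℂ))) with hq
  have hqmon : q.Monic := monic_prod_of_monic _ _ fun k _ => monic_X_sub_C _
  have hqdeg : q.natDegree = n := by
    rw [hq, natDegree_prod_of_monic _ _ fun k _ => monic_X_sub_C _]
    simp
  have hdq : q.degree = (n : WithBot ℕ) := by
    rw [degree_eq_natDegree hqmon.ne_zero, hqdeg]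
  have hdp : (p n).degree = (n : WithBot ℕ) := by
    rw [degree_eq_natDegree hmon.ne_zero, hdegn]
  have hlt : (q - p n).degree < (n : WithBot ℕ) := by
    have h := degree_sub_lt (hdq.trans hdp.symm) hqmon.ne_zero
      (by rw [hqmon.leadingCoeff, hmon.leadingCoeff])
    rwa [hdq] at h
  have heval : ∀ j, q.eval (α j) = ∏ k, (α j - α k / (r : ℂ)) := by
    intro j; rw [hq, eval_prod]; simp
  have hpz : ∀ j, (p n).eval (α j) = 0 := by
    intro j; rw [hroots, eval_prod]
    exact prod_eq_zero (mem_univ j) (by simp)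
  have hsum : ∑ j, a j = (q - p n).coeff (n - 1) := by
    rw [← key_sum α hα _ hlt]
    refine sum_congr rfl fun j _ => ?_
    rw [ha j, eval_sub, hpz, sub_zero, heval]
  have hS : ∑ k, α k = -((n : ℂ) * ((n : ℂ) + 1) / 2) := by
    have h1 : (p n).coeff (n - 1) = -∑ k, α k := by
      have h := prod_X_sub_C_coeff_card_pred (univ : Finset (Fin n)) α (by simp [hn])
      rw [hroots]
      simpa using h
    rw [hcoeffn] at h1
    linear_combination h1
  have hq1 : q.coeff (n - 1) = -∑ k, α k / (r : ℂ) := by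
    have h := prod_X_sub_C_coeff_card_pred (univ : Finset (Fin n))
      (fun k => α k / (r : ℂ)) (by simp [hn])
    rw [hq]
    simpa using h
  have hr0 : (r : ℂ) ≠ 0 := by
    exact_mod_cast (by linarith : r ≠ 0)
  rw [hsum, coeff_sub, hq1, hcoeffn, ← sum_div, hS]
  field_simp
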